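/- (Mean-shift monotonicity.) Let n ≥ 1, d ≥ 1, p₁,…,pₙ ∈ ℝ^d, and y ∈ ℝ^d. Define the mean-shift update y' = (Σ_{i=1}^n pᵢ · exp(−‖y−pᵢ‖²)) / (Σ_{i=1}^n exp(−‖y−pᵢ‖²)). Then G_P(y') ≥ G_P(y). -/

import Mathlib

open scoped BigOperators

theorem stmt_1 (n d : ℕ) (hn : 1 ≤ n) (hd : 1 ≤ d)
    (p : Fin n → EuclideanSpace ℝ (Fin d)) (y y' : EuclideanSpace ℝ (Fin d))
    (hy' : y' = (∑ i, Real.exp (-‖y - p i‖ ^ 2))⁻¹ •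
      ∑ i, Real.exp (-‖y - p i‖ ^ 2) • p i) :
    ∑ i, Real.exp (-‖y' - p i‖ ^ 2) ≥ ∑ i, Real.exp (-‖y - p i‖ ^ 2) := by
  haveI : NeZero n := ⟨by omega⟩
  set w : Fin n → ℝ := fun i => Real.exp (-‖y - p i‖ ^ 2) with hw
  set W : ℝ := ∑ i, w i with hWdef
  have hwpos : ∀ i, 0 < w i := fun i => Real.exp_pos _
  have hW : 0 < W := Finset.sum_pos (fun i _ => hwpos i) Finset.univ_nonempty
  have hsum : ∑ i, w i • p i = W • y' := by
    rw [hy', smul_smul, mul_inv_cancel₀ hW.ne', one_smul]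
  have key : ∀ i, w i * (1 + (‖y - p i‖ ^ 2 - ‖y' - p i‖ ^ 2))
      ≤ Real.exp (-‖y' - p i‖ ^ 2) := by
    intro i
    have h := Real.add_one_le_exp (‖y - p i‖ ^ 2 - ‖y' - p i‖ ^ 2)
    calc w i * (1 + (‖y - p i‖ ^ 2 - ‖y' - p i‖ ^ 2))
        ≤ w i * Real.exp (‖y - p i‖ ^ 2 - ‖y' - p i‖ ^ 2) := by
          apply mul_le_mul_of_nonneg_left _ (hwpos i).le
          linarith
      _ = Real.exp (-‖y' - p i‖ ^ 2) := by
          rw [hw, ← Real.exp_add]; ring_nf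
  have expand : ∀ i, ‖y - p i‖ ^ 2 - ‖y' - p i‖ ^ 2
      = ‖y‖ ^ 2 - ‖y'‖ ^ 2 - 2 * (inner ℝ (y - y') (p i) : ℝ) := by
    intro i
    have h1 := @norm_sub_sq_real (EuclideanSpace ℝ (Fin d)) _ _ y (p i)
    have h2 := @norm_sub_sq_real (EuclideanSpace ℝ (Fin d)) _ _ y' (p i)
    rw [h1, h2, inner_sub_left]; ring
  have hinner : ∑ i, w i * (inner ℝ (y - y') (p i) : ℝ)
      = W * (inner ℝ (y - y') y' : ℝ) := by
    have h : (inner ℝ (y - y') (∑ i, w i • p i) : ℝ)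
        = ∑ i, w i * (inner ℝ (y - y') (p i) : ℝ) := by
      rw [inner_sum]
      exact Finset.sum_congr rfl fun i _ => real_inner_smul_right _ _ _
    rw [← h, hsum, real_inner_smul_right]
  have identity : ∑ i, w i * (‖y - p i‖ ^ 2 - ‖y' - p i‖ ^ 2) = W * ‖y - y'‖ ^ 2 := by
    have step1 : ∑ i, w i * (‖y - p i‖ ^ 2 - ‖y' - p i‖ ^ 2)
        = ∑ i, (w i * (‖y‖ ^ 2 - ‖y'‖ ^ 2) - 2 * (w i * (inner ℝ (y - y') (p i) : ℝ))) := by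
      refine Finset.sum_congr rfl fun i _ => ?_
      rw [expand i]; ring
    rw [step1, Finset.sum_sub_distrib, ← Finset.sum_mul, ← Finset.mul_sum, hinner]
    have h3 := @norm_sub_sq_real (EuclideanSpace ℝ (Fin d)) _ _ y y'
    have h4 : (inner ℝ (y - y') y' : ℝ) = inner ℝ y y' - inner ℝ y' y' := inner_sub_left _ _ _
    have h5 : (inner ℝ y' y' : ℝ) = ‖y'‖ ^ 2 := real_inner_self_eq_norm_sq _
    rw [h3, h4, h5]; ring
  calc ∑ i, Real.exp (-‖y' - p i‖ ^ 2)
      ≥ ∑ i, w i * (1 + (‖y - p i‖ ^ 2 - ‖y' - p i‖ ^ 2)) :=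
        Finset.sum_le_sum fun i _ => key i
    _ = W + ∑ i, w i * (‖y - p i‖ ^ 2 - ‖y' - p i‖ ^ 2) := by
        rw [hWdef, ← Finset.sum_add_distrib]
        exact Finset.sum_congr rfl fun i _ => by ring
    _ = W + W * ‖y - y'‖ ^ 2 := by rw [identity]
    _ ≥ W := by nlinarith [sq_nonneg ‖y - y'‖, hW.le]
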